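/- Let φ : ℕ → (0,∞) be in weak-ℓ¹ with norm M, let 1 < p ≤ b ≤ p' < ∞, and suppose a : ℕ → [0,∞) is a sequence satisfying both (∑_n a(n)^p φ(n)^{2−p})^{1/p} ≤ C₁ M^{(2−p)/p} A (Paley bound) and (∑_n a(n)^{p'})^{1/p'} ≤ C₂ A (Hausdorff–Young bound) for some A > 0. Then there exists C > 0, depending only on p, b, C₁, C₂, such that (∑_n (a(n) φ(n)^{1/b − 1/p'})^b)^{1/b} ≤ C M^{1/b − 1/p'} A. -/

import Mathlib

open scoped ENNReal

/-- Hausdorff–Young–Paley interpolation for sequences: there is a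
constant `C > 0` depending only on `p, b, C₁, C₂` such that whenever a nonnegative
sequence `a` satisfies both the Paley bound
`(∑ a(n)^p φ(n)^{2-p})^{1/p} ≤ C₁ M^{(2-p)/p} A` and the Hausdorff–Young bound
`(∑ a(n)^{p'})^{1/p'} ≤ C₂ A` for a positive weak-`ℓ¹` weight `φ` with norm `M`,
one has `(∑ (a(n) φ(n)^{1/b - 1/p'})^b)^{1/b} ≤ C M^{1/b - 1/p'} A`. -/
lemma holder_tsum (X Y : ℕ → ℝ≥0∞) (θ : ℝ) (h0 : 0 ≤ θ) (h1 : θ ≤ 1) :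
    ∑' n, X n ^ θ * Y n ^ (1 - θ) ≤ (∑' n, X n) ^ θ * (∑' n, Y n) ^ (1 - θ) := by
  rcases eq_or_lt_of_le h0 with h0 | h0
  · simp [← h0]
  rcases eq_or_lt_of_le h1 with h1 | h1
  · simp [h1]
  have hconj : (1 / θ).HolderConjugate (1 / (1 - θ)) := by
    rw [Real.holderConjugate_iff]
    constructor
    · rw [lt_div_iff₀ h0]; linarith
    · rw [one_div, inv_inv, one_div, inv_inv]; ring
  have key := ENNReal.lintegral_mul_le_Lp_mul_Lq
    (MeasureTheory.Measure.count : MeasureTheory.Measure ℕ)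
    hconj (f := fun n => X n ^ θ) (g := fun n => Y n ^ (1 - θ))
    (Measurable.aemeasurable (by measurability)) (Measurable.aemeasurable (by measurability))
  simp only [MeasureTheory.lintegral_count, Pi.mul_apply] at key
  have e1 : ∀ n, (X n ^ θ) ^ (1 / θ) = X n := fun n => by
    rw [← ENNReal.rpow_mul, mul_one_div, div_self h0.ne', ENNReal.rpow_one]
  have e2 : ∀ n, (Y n ^ (1 - θ)) ^ (1 / (1 - θ)) = Y n := fun n => by
    rw [← ENNReal.rpow_mul, mul_one_div, div_self (by linarith : (1:ℝ) - θ ≠ 0), ENNReal.rpow_one]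
  simp only [e1, e2, one_div_one_div] at key
  exact key

theorem hausdorff_young_paley_sequences
    (p p' b : ℝ) (hp1 : 1 < p) (hpb : p ≤ b) (hbp' : b ≤ p')
    (hp' : p' = p / (p - 1)) (C₁ C₂ : ℝ) :
    ∃ C : ℝ, 0 < C ∧
      ∀ (φ : ℕ → ℝ), (∀ n, 0 < φ n) →
      ∀ M : ℝ, 0 < M →
      (∀ s : ℝ, 0 < s → {n : ℕ | s < φ n}.Finite) →
      (∀ s : ℝ, 0 < s → s * ({n : ℕ | s < φ n}.ncard : ℝ) ≤ M) →
      ∀ (a : ℕ → ℝ), (∀ n, 0 ≤ a n) →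
      ∀ A : ℝ, 0 < A →
      ((∑' n : ℕ, ENNReal.ofReal (a n ^ p * φ n ^ (2 - p))) ^ (1 / p)
        ≤ ENNReal.ofReal (C₁ * M ^ ((2 - p) / p) * A)) →
      ((∑' n : ℕ, ENNReal.ofReal (a n ^ p')) ^ (1 / p')
        ≤ ENNReal.ofReal (C₂ * A)) →
      (∑' n : ℕ, ENNReal.ofReal ((a n * φ n ^ (1 / b - 1 / p')) ^ b)) ^ (1 / b)
        ≤ ENNReal.ofReal (C * M ^ (1 / b - 1 / p') * A) := by
  have hp0 : 0 < p := by linarith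
  have hb0 : 0 < b := by linarith
  have hp'1 : 1 < p' := by
    rw [hp', lt_div_iff₀ (by linarith : (0:ℝ) < p - 1)]; linarith
  have hp'0 : 0 < p' := by linarith
  have hpp' : 1 / p + 1 / p' = 1 := by
    rw [hp']; field_simp; ring
  have h1p' : 1 / p' = 1 - 1 / p := by linarith
  have h2p : (2 - p) / p = 1 / p - 1 / p' := by
    rw [h1p']; field_simp; ring
  set t : ℝ := (1 / b - 1 / p') / (1 / p - 1 / p') with ht_def
  have ht_eq : t * (1 / p - 1 / p') = 1 / b - 1 / p' := by
    by_cases hpeq : p = p'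
    · have hbe : b = p' := le_antisymm hbp' (hpeq ▸ hpb)
      simp [ht_def, hpeq, hbe]
    · have hlt : p < p' := lt_of_le_of_ne (le_trans hpb hbp') hpeq
      have hne : 1 / p - 1 / p' ≠ 0 := by
        have : 1 / p' < 1 / p := one_div_lt_one_div_of_lt hp0 hlt
        linarith
      rw [ht_def, div_mul_cancel₀ _ hne]
  have ht0 : 0 ≤ t := by
    by_cases hpeq : p = p'
    · have hbe : b = p' := le_antisymm hbp' (hpeq ▸ hpb)
      simp [ht_def, hpeq, hbe]
    · have hlt : p < p' := lt_of_le_of_ne (le_trans hpb hbp') hpeq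
      have hden : 0 < 1 / p - 1 / p' := by
        have : 1 / p' < 1 / p := one_div_lt_one_div_of_lt hp0 hlt
        linarith
      have hnum : 0 ≤ 1 / b - 1 / p' := by
        have : 1 / p' ≤ 1 / b := one_div_le_one_div_of_le hb0 hbp'
        linarith
      positivity
  have ht1 : t ≤ 1 := by
    by_cases hpeq : p = p'
    · have hbe : b = p' := le_antisymm hbp' (hpeq ▸ hpb)
      simp [ht_def, hpeq, hbe]
    · have hlt : p < p' := lt_of_le_of_ne (le_trans hpb hbp') hpeq
      have hden : 0 < 1 / p - 1 / p' := by
        have : 1 / p' < 1 / p := one_div_lt_one_div_of_lt hp0 hlt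
        linarith
      rw [ht_def, div_le_one hden]
      have : 1 / b ≤ 1 / p := one_div_le_one_div_of_le hp0 hpb
      linarith
  set θ : ℝ := t * b / p with hθ_def
  have hθ0 : 0 ≤ θ := by positivity
  have hsum : θ + (1 - t) * b / p' = 1 := by
    have e : θ + (1 - t) * b / p' = b * (t * (1 / p - 1 / p')) + b / p' := by
      rw [hθ_def]; ring
    rw [e, ht_eq]
    field_simp
    ring
  have hθ1 : θ ≤ 1 := by
    have h2 : 0 ≤ (1 - t) * b / p' :=
      div_nonneg (mul_nonneg (by linarith) hb0.le) hp'0.le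
    linarith
  have hab : p * θ + p' * (1 - θ) = b := by
    have e1 : p * θ = t * b := by rw [hθ_def]; field_simp
    have e2 : 1 - θ = (1 - t) * b / p' := by linarith
    rw [e1, e2]
    field_simp
    ring
  have hφexp : (2 - p) * θ = (1 / b - 1 / p') * b := by
    have e : (2 - p) * θ = b * (t * ((2 - p) / p)) := by rw [hθ_def]; field_simp
    rw [e, h2p, ht_eq]; ring
  set c1 : ℝ := max C₁ 1 with hc1
  set c2 : ℝ := max C₂ 1 with hc2
  have hc10 : 0 < c1 := lt_of_lt_of_le one_pos (le_max_right _ _)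
  have hc20 : 0 < c2 := lt_of_lt_of_le one_pos (le_max_right _ _)
  refine ⟨c1 ^ t * c2 ^ (1 - t), by positivity, ?_⟩
  intro φ hφ M hM _ _ a ha A hA h1 h2
  have h1' : (∑' n : ℕ, ENNReal.ofReal (a n ^ p * φ n ^ (2 - p))) ^ (1 / p)
      ≤ ENNReal.ofReal (c1 * M ^ ((2 - p) / p) * A) := by
    refine le_trans h1 (ENNReal.ofReal_le_ofReal ?_)
    have h : C₁ * M ^ ((2 - p) / p) ≤ c1 * M ^ ((2 - p) / p) :=
      mul_le_mul_of_nonneg_right (le_max_left _ _) (by positivity)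
    exact mul_le_mul_of_nonneg_right h hA.le
  have h2' : (∑' n : ℕ, ENNReal.ofReal (a n ^ p')) ^ (1 / p')
      ≤ ENNReal.ofReal (c2 * A) := by
    refine le_trans h2 (ENNReal.ofReal_le_ofReal ?_)
    exact mul_le_mul_of_nonneg_right (le_max_left _ _) hA.le
  have hterm : ∀ n, ENNReal.ofReal ((a n * φ n ^ (1 / b - 1 / p')) ^ b)
      = (ENNReal.ofReal (a n ^ p * φ n ^ (2 - p))) ^ θ
        * (ENNReal.ofReal (a n ^ p')) ^ (1 - θ) := by
    intro n
    have han := ha n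
    have hφn := (hφ n).le
    rw [ENNReal.ofReal_rpow_of_nonneg
        (mul_nonneg (Real.rpow_nonneg han _) (Real.rpow_nonneg hφn _)) hθ0,
      ENNReal.ofReal_rpow_of_nonneg (Real.rpow_nonneg han _) (by linarith),
      ← ENNReal.ofReal_mul (by positivity)]
    congr 1
    have lhs : (a n * φ n ^ (1 / b - 1 / p')) ^ b
        = a n ^ b * φ n ^ ((1 / b - 1 / p') * b) := by
      rw [Real.mul_rpow han (Real.rpow_nonneg hφn _), ← Real.rpow_mul hφn]
    have rhs : (a n ^ p * φ n ^ (2 - p)) ^ θ * (a n ^ p') ^ (1 - θ)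
        = (a n ^ (p * θ) * a n ^ (p' * (1 - θ))) * φ n ^ ((2 - p) * θ) := by
      rw [Real.mul_rpow (Real.rpow_nonneg han _) (Real.rpow_nonneg hφn _),
        ← Real.rpow_mul han, ← Real.rpow_mul hφn, ← Real.rpow_mul han]
      ring
    rw [lhs, rhs, ← Real.rpow_add' han (by rw [hab]; exact hb0.ne'), hab, hφexp]
  calc (∑' n : ℕ, ENNReal.ofReal ((a n * φ n ^ (1 / b - 1 / p')) ^ b)) ^ (1 / b)
      = (∑' n : ℕ, (ENNReal.ofReal (a n ^ p * φ n ^ (2 - p))) ^ θ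
          * (ENNReal.ofReal (a n ^ p')) ^ (1 - θ)) ^ (1 / b) := by
        rw [tsum_congr hterm]
    _ ≤ ((∑' n : ℕ, ENNReal.ofReal (a n ^ p * φ n ^ (2 - p))) ^ θ
          * (∑' n : ℕ, ENNReal.ofReal (a n ^ p')) ^ (1 - θ)) ^ (1 / b) :=
        ENNReal.rpow_le_rpow (holder_tsum _ _ θ hθ0 hθ1) (by positivity)
    _ = ((∑' n : ℕ, ENNReal.ofReal (a n ^ p * φ n ^ (2 - p))) ^ (1 / p)) ^ t
          * ((∑' n : ℕ, ENNReal.ofReal (a n ^ p')) ^ (1 / p')) ^ (1 - t) := by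
        rw [ENNReal.mul_rpow_of_nonneg _ _ (by positivity),
          ← ENNReal.rpow_mul, ← ENNReal.rpow_mul, ← ENNReal.rpow_mul, ← ENNReal.rpow_mul]
        congr 1
        · congr 1
          rw [hθ_def]; field_simp
        · congr 1
          have e2 : 1 - θ = (1 - t) * b / p' := by linarith
          rw [e2]; field_simp
    _ ≤ (ENNReal.ofReal (c1 * M ^ ((2 - p) / p) * A)) ^ t
          * (ENNReal.ofReal (c2 * A)) ^ (1 - t) :=
        mul_le_mul' (ENNReal.rpow_le_rpow h1' ht0) (ENNReal.rpow_le_rpow h2' (by linarith))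
    _ = ENNReal.ofReal ((c1 * M ^ ((2 - p) / p) * A) ^ t * (c2 * A) ^ (1 - t)) := by
        rw [ENNReal.ofReal_rpow_of_pos (by positivity), ENNReal.ofReal_rpow_of_pos (by positivity),
          ← ENNReal.ofReal_mul (by positivity)]
    _ = ENNReal.ofReal (c1 ^ t * c2 ^ (1 - t) * M ^ (1 / b - 1 / p') * A) := by
        congr 1
        have hMe : (0:ℝ) ≤ M ^ ((2 - p) / p) := by positivity
        have eM : M ^ ((2 - p) / p * t) = M ^ (1 / b - 1 / p') := by
          congr 1
          rw [h2p, mul_comm]; exact ht_eq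
        have eA : A ^ t * A ^ (1 - t) = A := by
          rw [← Real.rpow_add hA]; norm_num
        rw [Real.mul_rpow (mul_nonneg hc10.le hMe) hA.le, Real.mul_rpow hc10.le hMe,
          Real.mul_rpow hc20.le hA.le, ← Real.rpow_mul hM.le, eM]
        linear_combination c1 ^ t * c2 ^ (1 - t) * M ^ (1 / b - 1 / p') * eA
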